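/- Let Q ≥ 2, M, t be positive integers with t ≤ M, and let 0 < ε < 1. For a ∈ (ℤ/Qℤ)^M and c ∈ ℤ/Qℤ, define the hitting probability p_{a,c,t} := Pr_{x ~ U(X_t)}[x_1 = 1 | ⟨a, x⟩ = c mod Q], where X_t := {x ∈ {0,1}^M : Σ_i x_i = t} and x is uniform on X_t; if no x ∈ X_t satisfies ⟨a, x⟩ = c mod Q, define p_{a,c,t} := 1. Then, with a chosen uniformly from (ℤ/Qℤ)^M and c chosen uniformly from ℤ/Qℤ (independently), the probability that p_{a,c,t} ≥ ((1+ε)/(1−ε)) · (t/M) is at most 4 Q^{1/4} / (ε · C(M−1, t−1)^{1/4}). -/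

import Mathlib

open scoped Classical

/-- The hitting probability `p_{a,c,t}`: the probability that a uniformly random subset
`S ⊆ [M]` of size `t` with `∑_{i ∈ S} a_i = c (mod Q)` contains the first index
(equivalently, for `x` uniform on `X_t := {x ∈ {0,1}^M : ‖x‖₁ = t}`, the conditional
probability that `x_1 = 1` given `⟨a, x⟩ = c mod Q`). If no such subset exists, it is
defined to be `1`. -/
noncomputable def hitProb (Q M t : ℕ) [NeZero Q] [NeZero M]
    (a : Fin M → ZMod Q) (c : ZMod Q) : ℝ :=
  let A := Finset.univ.filter (fun S : Finset (Fin M) => S.card = t ∧ ∑ i ∈ S, a i = c)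
  if A.Nonempty then ((A.filter (fun S => (0 : Fin M) ∈ S)).card : ℝ) / A.card else 1

open Finset

lemma fiber_card_mul {G H : Type*} [AddCommGroup G] [Fintype G] [AddCommGroup H] [Fintype H]
    [DecidableEq H] (φ : G →+ H) (hφ : Function.Surjective φ) (h : H) :
    (Finset.univ.filter (fun g => φ g = h)).card * Fintype.card H = Fintype.card G := by
  have hfib : ∀ h' : H, (Finset.univ.filter (fun g => φ g = h')).card
      = (Finset.univ.filter (fun g => φ g = h)).card := by
    intro h'
    obtain ⟨g', hg'⟩ := hφ h'
    obtain ⟨g0, hg0⟩ := hφ h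
    refine Finset.card_bij' (fun x _ => x - g' + g0) (fun y _ => y - g0 + g') ?_ ?_ ?_ ?_
    · intro a ha
      simp only [Finset.mem_filter, Finset.mem_univ, true_and] at ha ⊢
      simp [map_add, map_sub, ha, hg', hg0]
    · intro a ha
      simp only [Finset.mem_filter, Finset.mem_univ, true_and] at ha ⊢
      simp [map_add, map_sub, ha, hg', hg0]
    · intro a _; simp
    · intro a _; simp
  calc (Finset.univ.filter (fun g => φ g = h)).card * Fintype.card H
      = ∑ h' : H, (Finset.univ.filter (fun g => φ g = h')).card := by
        rw [Finset.sum_congr rfl (fun h' _ => hfib h')]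
        simp [mul_comm]
    _ = Fintype.card G := by
        rw [← Finset.card_eq_sum_card_fiberwise (fun x _ => Finset.mem_univ (φ x))]
        simp

lemma count_one (Q M : ℕ) [NeZero Q] (S : Finset (Fin M)) :
    (Finset.univ.filter (fun ac : (Fin M → ZMod Q) × ZMod Q => ∑ i ∈ S, ac.1 i = ac.2)).card
      = Q ^ M := by
  have hQ : (0:ℕ) < Q := Nat.pos_of_ne_zero (NeZero.ne Q)
  set φ : ((Fin M → ZMod Q) × ZMod Q) →+ ZMod Q :=
    AddMonoidHom.mk' (fun ac => (∑ i ∈ S, ac.1 i) - ac.2)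
      (by intro a b
          simp only [Prod.fst_add, Prod.snd_add, Pi.add_apply, Finset.sum_add_distrib]
          ring) with hφdef
  have hsurj : Function.Surjective φ := by
    intro h
    exact ⟨(0, -h), by simp [hφdef]⟩
  have := fiber_card_mul φ hsurj 0
  have hfilter : (Finset.univ.filter (fun g => φ g = 0))
      = (Finset.univ.filter (fun ac : (Fin M → ZMod Q) × ZMod Q => ∑ i ∈ S, ac.1 i = ac.2)) := by
    apply Finset.filter_congr
    intro x _
    simp [hφdef, sub_eq_zero]
  rw [hfilter] at this
  have hcard : Fintype.card ((Fin M → ZMod Q) × ZMod Q) = Q ^ M * Q := by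
    simp [ZMod.card]
  rw [hcard, ZMod.card] at this
  exact Nat.eq_of_mul_eq_mul_right hQ this

lemma count_two (Q M : ℕ) [NeZero Q] (S S' : Finset (Fin M)) (i : Fin M)
    (hiS : i ∈ S) (hiS' : i ∉ S') :
    (Finset.univ.filter (fun ac : (Fin M → ZMod Q) × ZMod Q =>
      (∑ i ∈ S, ac.1 i = ac.2) ∧ (∑ i ∈ S', ac.1 i = ac.2))).card * Q = Q ^ M := by
  have hQ : (0:ℕ) < Q := Nat.pos_of_ne_zero (NeZero.ne Q)
  set φ : ((Fin M → ZMod Q) × ZMod Q) →+ ZMod Q × ZMod Q :=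
    AddMonoidHom.mk' (fun ac => ((∑ i ∈ S, ac.1 i) - ac.2, (∑ i ∈ S', ac.1 i) - ac.2))
      (by intro a b
          simp only [Prod.fst_add, Prod.snd_add, Pi.add_apply, Finset.sum_add_distrib,
            Prod.mk_add_mk, Prod.mk.injEq]
          constructor <;> ring) with hφdef
  have hsurj : Function.Surjective φ := by
    rintro ⟨u, v⟩
    refine ⟨((fun j => if j = i then u - v else 0), -v), ?_⟩
    simp only [hφdef, AddMonoidHom.mk'_apply, Finset.sum_ite_eq', hiS, hiS', if_true, if_false,
      Finset.sum_const_zero, Prod.mk.injEq]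
    constructor <;> ring
  have := fiber_card_mul φ hsurj 0
  have hfilter : (Finset.univ.filter (fun g => φ g = 0))
      = (Finset.univ.filter (fun ac : (Fin M → ZMod Q) × ZMod Q =>
          (∑ i ∈ S, ac.1 i = ac.2) ∧ (∑ i ∈ S', ac.1 i = ac.2))) := by
    apply Finset.filter_congr
    intro x _
    simp [hφdef, Prod.ext_iff, sub_eq_zero]
  rw [hfilter] at this
  have hcard1 : Fintype.card ((Fin M → ZMod Q) × ZMod Q) = Q ^ M * Q := by
    simp [ZMod.card]
  have hcard2 : Fintype.card (ZMod Q × ZMod Q) = Q * Q := by simp [ZMod.card]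
  rw [hcard1, hcard2, ← mul_assoc] at this
  exact Nat.eq_of_mul_eq_mul_right hQ this

lemma sum_count (Q M : ℕ) [NeZero Q] (pred : Finset (Fin M) → Prop) [DecidablePred pred] :
    ∑ ac : (Fin M → ZMod Q) × ZMod Q,
      ((Finset.univ.filter pred).filter (fun S => ∑ i ∈ S, ac.1 i = ac.2)).card
    = (Finset.univ.filter pred).card * Q ^ M := by
  have h1 : ∀ ac : (Fin M → ZMod Q) × ZMod Q,
      ((Finset.univ.filter pred).filter (fun S => ∑ i ∈ S, ac.1 i = ac.2)).card
      = ∑ S ∈ Finset.univ.filter pred, if (∑ i ∈ S, ac.1 i = ac.2) then 1 else 0 := by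
    intro ac; rw [Finset.card_filter]
  simp only [h1]
  rw [Finset.sum_comm]
  have h2 : ∀ S : Finset (Fin M),
      ∑ ac : (Fin M → ZMod Q) × ZMod Q, (if (∑ i ∈ S, ac.1 i = ac.2) then 1 else 0)
      = Q ^ M := by
    intro S
    rw [← Finset.card_filter]
    exact count_one Q M S
  rw [Finset.sum_congr rfl (fun S _ => h2 S), Finset.sum_const, smul_eq_mul]

lemma sum_count_sq (Q M t : ℕ) [NeZero Q] (pred : Finset (Fin M) → Prop) [DecidablePred pred]
    (hpred : ∀ S, pred S → S.card = t) :
    Q * ∑ ac : (Fin M → ZMod Q) × ZMod Q,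
      ((Finset.univ.filter pred).filter (fun S => ∑ i ∈ S, ac.1 i = ac.2)).card ^ 2
    ≤ Q * ((Finset.univ.filter pred).card * Q ^ M)
      + (Finset.univ.filter pred).card ^ 2 * Q ^ M := by
  classical
  set F := Finset.univ.filter pred with hF
  -- expand square as double sum over pairs
  have h1 : ∀ ac : (Fin M → ZMod Q) × ZMod Q,
      ((F.filter (fun S => ∑ i ∈ S, ac.1 i = ac.2)).card) ^ 2
      = ∑ S ∈ F, ∑ S' ∈ F,
          (if ((∑ i ∈ S, ac.1 i = ac.2) ∧ (∑ i ∈ S', ac.1 i = ac.2)) then 1 else 0) := by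
    intro ac
    rw [sq, Finset.card_filter, Finset.sum_mul_sum]
    congr 1; ext S; congr 1; ext S'
    by_cases h : (∑ i ∈ S, ac.1 i = ac.2) <;> by_cases h' : (∑ i ∈ S', ac.1 i = ac.2) <;>
      simp [h, h']
  simp only [h1]
  rw [Finset.sum_comm]
  -- for each S, swap inner sums too
  have h2 : ∀ S ∈ F, ∑ ac : (Fin M → ZMod Q) × ZMod Q, ∑ S' ∈ F,
      (if ((∑ i ∈ S, ac.1 i = ac.2) ∧ (∑ i ∈ S', ac.1 i = ac.2)) then 1 else 0)
      = ∑ S' ∈ F, (Finset.univ.filter (fun ac : (Fin M → ZMod Q) × ZMod Q =>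
          (∑ i ∈ S, ac.1 i = ac.2) ∧ (∑ i ∈ S', ac.1 i = ac.2))).card := by
    intro S _
    rw [Finset.sum_comm]
    exact Finset.sum_congr rfl (fun S' _ => (Finset.card_filter _ _).symm)
  rw [Finset.sum_congr rfl h2, Finset.mul_sum]
  -- now bound each S-term
  have key : ∀ S ∈ F,
      Q * ∑ S' ∈ F, (Finset.univ.filter (fun ac : (Fin M → ZMod Q) × ZMod Q =>
          (∑ i ∈ S, ac.1 i = ac.2) ∧ (∑ i ∈ S', ac.1 i = ac.2))).card
      ≤ Q * Q ^ M + F.card * Q ^ M := by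
    intro S hS
    rw [← Finset.add_sum_erase _ _ hS, Nat.mul_add]
    have hdiag : (Finset.univ.filter (fun ac : (Fin M → ZMod Q) × ZMod Q =>
        (∑ i ∈ S, ac.1 i = ac.2) ∧ (∑ i ∈ S, ac.1 i = ac.2))).card = Q ^ M := by
      rw [← count_one Q M S]
      congr 1
      apply Finset.filter_congr; intro x _; simp
    have hoff : ∀ S' ∈ F.erase S,
        Q * (Finset.univ.filter (fun ac : (Fin M → ZMod Q) × ZMod Q =>
          (∑ i ∈ S, ac.1 i = ac.2) ∧ (∑ i ∈ S', ac.1 i = ac.2))).card = Q ^ M := by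
      intro S' hS'
      have hne : S' ≠ S := Finset.ne_of_mem_erase hS'
      have hS'F : S' ∈ F := Finset.mem_of_mem_erase hS'
      have hcS : S.card = t := hpred S (Finset.mem_filter.mp hS).2
      have hcS' : S'.card = t := hpred S' (Finset.mem_filter.mp hS'F).2
      have hnsub : ¬ S ⊆ S' := by
        intro hsub
        exact hne (Finset.eq_of_subset_of_card_le hsub (by omega)).symm
      obtain ⟨i, hiS, hiS'⟩ := Finset.not_subset.mp hnsub
      rw [mul_comm]
      exact count_two Q M S S' i hiS hiS'
    calc Q * (Finset.univ.filter (fun ac : (Fin M → ZMod Q) × ZMod Q =>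
            (∑ i ∈ S, ac.1 i = ac.2) ∧ (∑ i ∈ S, ac.1 i = ac.2))).card
          + Q * ∑ S' ∈ F.erase S, (Finset.univ.filter (fun ac : (Fin M → ZMod Q) × ZMod Q =>
            (∑ i ∈ S, ac.1 i = ac.2) ∧ (∑ i ∈ S', ac.1 i = ac.2))).card
        = Q * Q ^ M + ∑ S' ∈ F.erase S, Q * (Finset.univ.filter
            (fun ac : (Fin M → ZMod Q) × ZMod Q =>
            (∑ i ∈ S, ac.1 i = ac.2) ∧ (∑ i ∈ S', ac.1 i = ac.2))).card := by
          rw [hdiag, Finset.mul_sum]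
      _ = Q * Q ^ M + ∑ S' ∈ F.erase S, Q ^ M := by
          rw [Finset.sum_congr rfl hoff]
      _ ≤ Q * Q ^ M + F.card * Q ^ M := by
          rw [Finset.sum_const, smul_eq_mul]
          have h3 : (F.erase S).card ≤ F.card :=
            Finset.card_le_card (Finset.erase_subset S F)
          gcongr
  calc ∑ S ∈ F, Q * ∑ S' ∈ F, (Finset.univ.filter (fun ac : (Fin M → ZMod Q) × ZMod Q =>
          (∑ i ∈ S, ac.1 i = ac.2) ∧ (∑ i ∈ S', ac.1 i = ac.2))).card
      ≤ ∑ S ∈ F, (Q * Q ^ M + F.card * Q ^ M) := Finset.sum_le_sum key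
    _ = Q * (F.card * Q ^ M) + F.card ^ 2 * Q ^ M := by
        rw [Finset.sum_const, smul_eq_mul]; ring

lemma card_pred0 (M t : ℕ) :
    (Finset.univ.filter (fun S : Finset (Fin M) => S.card = t)).card = M.choose t := by
  have : (Finset.univ.filter (fun S : Finset (Fin M) => S.card = t))
      = Finset.powersetCard t (Finset.univ : Finset (Fin M)) := by
    ext S; simp [Finset.mem_powersetCard]
  rw [this, Finset.card_powersetCard]
  simp

lemma card_pred1 (M t : ℕ) [NeZero M] (ht : 1 ≤ t) :
    (Finset.univ.filter (fun S : Finset (Fin M) => S.card = t ∧ (0 : Fin M) ∈ S)).card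
      = (M - 1).choose (t - 1) := by
  classical
  have hM0 : 0 < M := Nat.pos_of_ne_zero (NeZero.ne M)
  have h := Finset.card_bij' (s := Finset.univ.filter (fun S : Finset (Fin M) => S.card = t ∧ (0 : Fin M) ∈ S))
    (t := Finset.powersetCard (t-1) ((Finset.univ : Finset (Fin M)).erase 0))
    (fun S _ => S.erase 0) (fun T _ => insert 0 T) ?_ ?_ ?_ ?_
  · rw [h, Finset.card_powersetCard, Finset.card_erase_of_mem (Finset.mem_univ _)]
    simp
  · intro S hS
    simp only [Finset.mem_filter, Finset.mem_univ, true_and] at hS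
    rw [Finset.mem_powersetCard]
    exact ⟨Finset.erase_subset_erase 0 (Finset.subset_univ S),
      by rw [Finset.card_erase_of_mem hS.2, hS.1]⟩
  · intro T hT
    rw [Finset.mem_powersetCard] at hT
    have h0T : (0 : Fin M) ∉ T := fun h => (Finset.mem_erase.mp (hT.1 h)).1 rfl
    simp only [Finset.mem_filter, Finset.mem_univ, true_and]
    exact ⟨by rw [Finset.card_insert_of_notMem h0T, hT.2]; omega, Finset.mem_insert_self 0 T⟩
  · intro S hS
    simp only [Finset.mem_filter, Finset.mem_univ, true_and] at hS
    exact Finset.insert_erase hS.2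
  · intro T hT
    rw [Finset.mem_powersetCard] at hT
    exact Finset.erase_insert (fun h => (Finset.mem_erase.mp (hT.1 h)).1 rfl)

lemma final_bound (r ε P : ℝ) (hr : 0 < r) (hε0 : 0 < ε) (hε1 : ε < 1)
    (hP1 : P ≤ 1) (hP2 : P ≤ 2*r/ε^2) : P ≤ 4*r^((1:ℝ)/4)/ε := by
  set s := r ^ ((1:ℝ)/4) with hs
  have hspos : 0 < s := Real.rpow_pos_of_pos hr _
  have hs4 : s^(4:ℕ) = r := by
    rw [hs, ← Real.rpow_natCast (r ^ ((1:ℝ)/4)) 4, ← Real.rpow_mul hr.le]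
    norm_num
  by_cases hcase : 1 ≤ 4*s/ε
  · linarith
  · push_neg at hcase
    have hs_lt : s < ε/4 := by
      rw [div_lt_one hε0] at hcase; linarith
    have key : 2*r/ε^2 ≤ 4*s/ε := by
      rw [div_le_div_iff₀ (by positivity) hε0]
      have h3 : s^3 ≤ (ε/4)^3 := pow_le_pow_left₀ hspos.le hs_lt.le 3
      have h4 : s*ε*s^3 ≤ s*ε*(ε/4)^3 := mul_le_mul_of_nonneg_left h3 (by positivity)
      have h5 : 0 ≤ s*ε^2*(128 - ε^2) :=
        mul_nonneg (mul_nonneg hspos.le (sq_nonneg ε)) (by nlinarith)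
      nlinarith [h4, h5, hs4, hspos, hε0, hε1]
    linarith

set_option maxHeartbeats 2000000 in
/-- For `Q ≥ 2`, `1 ≤ t ≤ M`, and `0 < ε < 1`, the probability over uniformly
random `a ∈ (ℤ/Qℤ)^M` and `c ∈ ℤ/Qℤ` that
`p_{a,c,t} ≥ ((1+ε)/(1-ε)) · (t/M)` is at most `4 Q^{1/4} / (ε · C(M-1,t-1)^{1/4})`. -/
theorem stmt_4 (Q M t : ℕ) [NeZero Q] [NeZero M] (hQ : 2 ≤ Q) (ht : 1 ≤ t) (htM : t ≤ M)
    (ε : ℝ) (hε0 : 0 < ε) (hε1 : ε < 1) :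
    ((Finset.univ.filter (fun ac : (Fin M → ZMod Q) × ZMod Q =>
        ((1 + ε) / (1 - ε)) * ((t : ℝ) / M) ≤ hitProb Q M t ac.1 ac.2)).card : ℝ)
      / Fintype.card ((Fin M → ZMod Q) × ZMod Q)
      ≤ 4 * (Q : ℝ) ^ ((1 : ℝ) / 4) / (ε * ((M - 1).choose (t - 1) : ℝ) ^ ((1 : ℝ) / 4)) := by
  classical
  have hQ0 : (0:ℕ) < Q := by omega
  have hM0 : (0:ℕ) < M := Nat.pos_of_ne_zero (NeZero.ne M)
  have hqR : (0:ℝ) < (Q:ℝ) := by exact_mod_cast hQ0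
  have hmR : (0:ℝ) < (M:ℝ) := by exact_mod_cast hM0
  have htR : (0:ℝ) < (t:ℝ) := by exact_mod_cast ht
  have h1ε : (0:ℝ) < 1 - ε := by linarith
  set C1 := (M-1).choose (t-1) with hC1def
  set C0 := M.choose t with hC0def
  have hC1pos : 0 < C1 := Nat.choose_pos (by omega)
  have hC0pos : 0 < C0 := Nat.choose_pos htM
  have hC1R : (0:ℝ) < (C1:ℝ) := by exact_mod_cast hC1pos
  have hC0R : (0:ℝ) < (C0:ℝ) := by exact_mod_cast hC0pos
  have hidN : M * C1 = C0 * t := by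
    have h := Nat.add_one_mul_choose_eq (M-1) (t-1)
    rw [show (M-1)+1 = M by omega, show (t-1)+1 = t by omega] at h
    exact h
  have hidR : (M:ℝ) * C1 = (C0:ℝ) * t := by exact_mod_cast hidN
  have hC1leC0 : (C1:ℝ) ≤ (C0:ℝ) := by
    have h2 : C0*t ≤ C0*M := Nat.mul_le_mul_left _ htM
    have h3 : M*C1 ≤ M*C0 := by rw [hidN, mul_comm M C0]; exact h2
    exact_mod_cast Nat.le_of_mul_le_mul_left h3 hM0
  -- counting functions
  set Nf : (Fin M → ZMod Q) × ZMod Q → ℕ := fun ac =>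
    ((Finset.univ.filter (fun S : Finset (Fin M) => S.card = t)).filter
      (fun S => ∑ i ∈ S, ac.1 i = ac.2)).card with hNf
  set N1f : (Fin M → ZMod Q) × ZMod Q → ℕ := fun ac =>
    ((Finset.univ.filter (fun S : Finset (Fin M) => S.card = t ∧ (0:Fin M) ∈ S)).filter
      (fun S => ∑ i ∈ S, ac.1 i = ac.2)).card with hN1f
  -- first and second moments
  have hsum1 : ∑ ac : (Fin M → ZMod Q) × ZMod Q, N1f ac = C1 * Q^M := by
    rw [hN1f, sum_count Q M _, card_pred1 M t ht]
  have hsum0 : ∑ ac : (Fin M → ZMod Q) × ZMod Q, Nf ac = C0 * Q^M := by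
    rw [hNf, sum_count Q M _, card_pred0 M t]
  have hsumsq1 : Q * ∑ ac : (Fin M → ZMod Q) × ZMod Q, (N1f ac)^2
      ≤ Q*(C1*Q^M) + C1^2*Q^M := by
    have h := sum_count_sq Q M t (fun S : Finset (Fin M) => S.card = t ∧ (0:Fin M) ∈ S)
      (fun S hS => hS.1)
    rw [card_pred1 M t ht] at h
    exact h
  have hsumsq0 : Q * ∑ ac : (Fin M → ZMod Q) × ZMod Q, (Nf ac)^2
      ≤ Q*(C0*Q^M) + C0^2*Q^M := by
    have h := sum_count_sq Q M t (fun S : Finset (Fin M) => S.card = t) (fun S hS => hS)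
    rw [card_pred0 M t] at h
    exact h
  have hsum1R : ∑ ac : (Fin M → ZMod Q) × ZMod Q, (N1f ac : ℝ) = (C1:ℝ) * (Q:ℝ)^M := by
    exact_mod_cast hsum1
  have hsum0R : ∑ ac : (Fin M → ZMod Q) × ZMod Q, (Nf ac : ℝ) = (C0:ℝ) * (Q:ℝ)^M := by
    exact_mod_cast hsum0
  have hsumsq1R : (Q:ℝ) * ∑ ac : (Fin M → ZMod Q) × ZMod Q, (N1f ac : ℝ)^2
      ≤ (Q:ℝ)*((C1:ℝ)*(Q:ℝ)^M) + (C1:ℝ)^2*(Q:ℝ)^M := by exact_mod_cast hsumsq1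
  have hsumsq0R : (Q:ℝ) * ∑ ac : (Fin M → ZMod Q) × ZMod Q, (Nf ac : ℝ)^2
      ≤ (Q:ℝ)*((C0:ℝ)*(Q:ℝ)^M) + (C0:ℝ)^2*(Q:ℝ)^M := by exact_mod_cast hsumsq0
  have hΩR : (Fintype.card ((Fin M → ZMod Q) × ZMod Q) : ℝ) = (Q:ℝ)^M * Q := by
    have : Fintype.card ((Fin M → ZMod Q) × ZMod Q) = Q^M * Q := by simp [ZMod.card]
    exact_mod_cast this
  -- variance bounds
  have hvar : ∀ (g : (Fin M → ZMod Q) × ZMod Q → ℕ) (C : ℕ),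
      (0:ℝ) < (C:ℝ) →
      (∑ ac : (Fin M → ZMod Q) × ZMod Q, (g ac : ℝ) = (C:ℝ) * (Q:ℝ)^M) →
      ((Q:ℝ) * ∑ ac : (Fin M → ZMod Q) × ZMod Q, (g ac : ℝ)^2
        ≤ (Q:ℝ)*((C:ℝ)*(Q:ℝ)^M) + (C:ℝ)^2*(Q:ℝ)^M) →
      ∑ ac : (Fin M → ZMod Q) × ZMod Q, ((g ac : ℝ) - (C:ℝ)/Q)^2 ≤ (C:ℝ) * (Q:ℝ)^M := by
    intro g C hCR hsumR hsumsqR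
    have hexp : ∀ ac : (Fin M → ZMod Q) × ZMod Q, ((g ac : ℝ) - (C:ℝ)/Q)^2
        = (g ac : ℝ)^2 - 2*((C:ℝ)/Q)*(g ac : ℝ) + ((C:ℝ)/Q)^2 := fun ac => by ring
    rw [Finset.sum_congr rfl (fun ac _ => hexp ac), Finset.sum_add_distrib,
      Finset.sum_sub_distrib, ← Finset.mul_sum, hsumR, Finset.sum_const, Finset.card_univ,
      nsmul_eq_mul, hΩR]
    have hA : ∑ ac : (Fin M → ZMod Q) × ZMod Q, (g ac : ℝ)^2
        ≤ (C:ℝ)*(Q:ℝ)^M + (C:ℝ)^2*(Q:ℝ)^M/Q := by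
      rw [← mul_le_mul_iff_right₀ hqR]
      calc (Q:ℝ) * ∑ ac : (Fin M → ZMod Q) × ZMod Q, (g ac : ℝ)^2
          ≤ (Q:ℝ)*((C:ℝ)*(Q:ℝ)^M) + (C:ℝ)^2*(Q:ℝ)^M := hsumsqR
        _ = (Q:ℝ) * ((C:ℝ)*(Q:ℝ)^M + (C:ℝ)^2*(Q:ℝ)^M/Q) := by field_simp
    have e1 : 2*((C:ℝ)/Q)*((C:ℝ)*(Q:ℝ)^M) - ((Q:ℝ)^M*(Q:ℝ))*((C:ℝ)/Q)^2
        = (C:ℝ)^2*(Q:ℝ)^M/Q := by field_simp; ring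
    linarith [hA, e1]
  have hvar1 := hvar N1f C1 hC1R hsum1R hsumsq1R
  have hvar0 := hvar Nf C0 hC0R hsum0R hsumsq0R
  -- Chebyshev sets
  set B1 := Finset.univ.filter (fun ac : (Fin M → ZMod Q) × ZMod Q =>
    (1+ε)*(C1:ℝ)/Q ≤ (N1f ac : ℝ)) with hB1
  set B2 := Finset.univ.filter (fun ac : (Fin M → ZMod Q) × ZMod Q =>
    (Nf ac : ℝ) ≤ (1-ε)*(C0:ℝ)/Q) with hB2
  have hcheb : ∀ (g : (Fin M → ZMod Q) × ZMod Q → ℕ) (C : ℕ) (Bs : Finset ((Fin M → ZMod Q) × ZMod Q)),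
      (0:ℝ) < (C:ℝ) →
      (∀ ac ∈ Bs, (ε*(C:ℝ)/Q)^2 ≤ ((g ac : ℝ) - (C:ℝ)/Q)^2) →
      (∑ ac : (Fin M → ZMod Q) × ZMod Q, ((g ac : ℝ) - (C:ℝ)/Q)^2 ≤ (C:ℝ) * (Q:ℝ)^M) →
      (Bs.card : ℝ) ≤ (Q:ℝ)^M * (Q:ℝ)^2/(ε^2*(C:ℝ)) := by
    intro g C Bs hCR hstep hvarg
    have hcheb1 : (Bs.card : ℝ) * (ε*(C:ℝ)/Q)^2 ≤ (C:ℝ) * (Q:ℝ)^M := by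
      calc (Bs.card:ℝ) * (ε*(C:ℝ)/Q)^2 = ∑ _ac ∈ Bs, (ε*(C:ℝ)/Q)^2 := by
            rw [Finset.sum_const, nsmul_eq_mul]
        _ ≤ ∑ ac ∈ Bs, ((g ac : ℝ) - (C:ℝ)/Q)^2 := Finset.sum_le_sum hstep
        _ ≤ ∑ ac : (Fin M → ZMod Q) × ZMod Q, ((g ac : ℝ) - (C:ℝ)/Q)^2 :=
            Finset.sum_le_sum_of_subset_of_nonneg (Finset.subset_univ _)
              (fun i _ _ => sq_nonneg _)
        _ ≤ (C:ℝ) * (Q:ℝ)^M := hvarg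
    have hpos : (0:ℝ) < (ε*(C:ℝ)/Q)^2 := by positivity
    calc (Bs.card:ℝ) ≤ (C:ℝ)*(Q:ℝ)^M/(ε*(C:ℝ)/Q)^2 := (le_div_iff₀ hpos).mpr hcheb1
      _ = (Q:ℝ)^M * (Q:ℝ)^2/(ε^2*(C:ℝ)) := by field_simp
  have hB1card : (B1.card : ℝ) ≤ (Q:ℝ)^M * (Q:ℝ)^2/(ε^2*(C1:ℝ)) := by
    apply hcheb N1f C1 B1 hC1R _ hvar1
    intro ac hac
    rw [hB1, Finset.mem_filter] at hac
    have e : (1+ε)*(C1:ℝ)/Q - (C1:ℝ)/Q = ε*(C1:ℝ)/Q := by ring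
    have h1 : ε*(C1:ℝ)/Q ≤ (N1f ac:ℝ) - (C1:ℝ)/Q := by linarith [hac.2]
    have h0 : (0:ℝ) ≤ ε*(C1:ℝ)/Q := by positivity
    nlinarith [h1, h0]
  have hB2card : (B2.card : ℝ) ≤ (Q:ℝ)^M * (Q:ℝ)^2/(ε^2*(C0:ℝ)) := by
    apply hcheb Nf C0 B2 hC0R _ hvar0
    intro ac hac
    rw [hB2, Finset.mem_filter] at hac
    have e : (C0:ℝ)/Q - (1-ε)*(C0:ℝ)/Q = ε*(C0:ℝ)/Q := by ring
    have h1 : ε*(C0:ℝ)/Q ≤ (C0:ℝ)/Q - (Nf ac:ℝ) := by linarith [hac.2]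
    have h0 : (0:ℝ) ≤ ε*(C0:ℝ)/Q := by positivity
    nlinarith [h1, h0]
  -- inclusion of bad event
  set B := Finset.univ.filter (fun ac : (Fin M → ZMod Q) × ZMod Q =>
    ((1 + ε) / (1 - ε)) * ((t : ℝ) / M) ≤ hitProb Q M t ac.1 ac.2) with hB
  have hsub : B ⊆ B1 ∪ B2 := by
    intro ac hac
    by_contra hnot
    rw [Finset.mem_union] at hnot
    push_neg at hnot
    obtain ⟨hn1, hn2⟩ := hnot
    have h1' : (N1f ac:ℝ) < (1+ε)*(C1:ℝ)/Q := by
      by_contra h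
      exact hn1 (by rw [hB1, Finset.mem_filter]; exact ⟨Finset.mem_univ _, not_lt.mp h⟩)
    have h2' : (1-ε)*(C0:ℝ)/Q < (Nf ac:ℝ) := by
      by_contra h
      exact hn2 (by rw [hB2, Finset.mem_filter]; exact ⟨Finset.mem_univ _, not_lt.mp h⟩)
    have hNpos : (0:ℝ) < (Nf ac:ℝ) := lt_trans (by positivity) h2'
    have hNfeq : Nf ac = (Finset.univ.filter
        (fun S : Finset (Fin M) => S.card = t ∧ ∑ i ∈ S, ac.1 i = ac.2)).card := by
      rw [hNf]
      simp only [Finset.filter_filter]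
    have hN1eq : N1f ac = ((Finset.univ.filter
        (fun S : Finset (Fin M) => S.card = t ∧ ∑ i ∈ S, ac.1 i = ac.2)).filter
        (fun S => (0:Fin M) ∈ S)).card := by
      rw [hN1f]
      simp only [Finset.filter_filter]
      congr 1
      apply Finset.filter_congr
      intro x _
      tauto
    have hne : (Finset.univ.filter
        (fun S : Finset (Fin M) => S.card = t ∧ ∑ i ∈ S, ac.1 i = ac.2)).Nonempty := by
      rw [← Finset.card_pos, ← hNfeq]
      exact_mod_cast hNpos
    rw [hB, Finset.mem_filter] at hac
    have hac2 := hac.2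
    simp only [hitProb] at hac2
    rw [if_pos hne, ← hN1eq, ← hNfeq] at hac2
    have hθpos : 0 < (1+ε)/(1-ε)*((t:ℝ)/M) :=
      mul_pos (div_pos (by linarith) h1ε) (div_pos htR hmR)
    have hkey : (1+ε)/(1-ε)*((t:ℝ)/M) * ((1-ε)*(C0:ℝ)/Q) = (1+ε)*(C1:ℝ)/Q := by
      field_simp
      linear_combination (-1:ℝ) * hidR
    have c2 : (1+ε)/(1-ε)*((t:ℝ)/M) * (Nf ac:ℝ) ≤ (N1f ac:ℝ) := (le_div_iff₀ hNpos).mp hac2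
    have c1 : (1+ε)/(1-ε)*((t:ℝ)/M) * ((1-ε)*(C0:ℝ)/Q)
        < (1+ε)/(1-ε)*((t:ℝ)/M) * (Nf ac:ℝ) := by
      exact mul_lt_mul_of_pos_left h2' hθpos
    linarith [hkey, c1, c2, h1']
  -- put it together
  have hΩpos : (0:ℝ) < (Fintype.card ((Fin M → ZMod Q) × ZMod Q) : ℝ) := by
    rw [hΩR]; positivity
  have hP1 : ((B.card:ℝ)) / (Fintype.card ((Fin M → ZMod Q) × ZMod Q) : ℝ) ≤ 1 := by
    rw [div_le_one hΩpos]
    exact_mod_cast Finset.card_le_univ B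
  have hP2 : ((B.card:ℝ)) / (Fintype.card ((Fin M → ZMod Q) × ZMod Q) : ℝ)
      ≤ 2*((Q:ℝ)/(C1:ℝ))/ε^2 := by
    rw [div_le_iff₀ hΩpos, hΩR]
    have hstep1 : (B.card:ℝ) ≤ (B1.card:ℝ) + (B2.card:ℝ) := by
      have := (Finset.card_le_card hsub).trans (Finset.card_union_le B1 B2)
      exact_mod_cast this
    calc (B.card:ℝ) ≤ (B1.card:ℝ) + (B2.card:ℝ) := hstep1
      _ ≤ (Q:ℝ)^M * (Q:ℝ)^2/(ε^2*(C1:ℝ)) + (Q:ℝ)^M * (Q:ℝ)^2/(ε^2*(C0:ℝ)) :=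
          add_le_add hB1card hB2card
      _ ≤ (Q:ℝ)^M * (Q:ℝ)^2/(ε^2*(C1:ℝ)) + (Q:ℝ)^M * (Q:ℝ)^2/(ε^2*(C1:ℝ)) := by
          gcongr
      _ = 2*((Q:ℝ)/(C1:ℝ))/ε^2 * ((Q:ℝ)^M * (Q:ℝ)) := by
          field_simp
          ring
  have hfin := final_bound ((Q:ℝ)/(C1:ℝ)) ε _ (div_pos hqR hC1R) hε0 hε1 hP1 hP2
  have hr : ((Q:ℝ)/(C1:ℝ)) ^ ((1:ℝ)/4) = (Q:ℝ)^((1:ℝ)/4) / (C1:ℝ)^((1:ℝ)/4) :=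
    Real.div_rpow hqR.le hC1R.le _
  rw [hr] at hfin
  have hq4 : (0:ℝ) < (Q:ℝ)^((1:ℝ)/4) := Real.rpow_pos_of_pos hqR _
  have hc4 : (0:ℝ) < (C1:ℝ)^((1:ℝ)/4) := Real.rpow_pos_of_pos hC1R _
  calc ((B.card:ℝ)) / (Fintype.card ((Fin M → ZMod Q) × ZMod Q) : ℝ)
      ≤ 4*((Q:ℝ)^((1:ℝ)/4) / (C1:ℝ)^((1:ℝ)/4))/ε := hfin
    _ = 4 * (Q : ℝ) ^ ((1 : ℝ) / 4) / (ε * (C1 : ℝ) ^ ((1 : ℝ) / 4)) := by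
        field_simp
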